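/- Let f ∈ ℝ[x₁,…,xₙ] satisfy conditions (C1), (C2) and (C3) and let λ_f be a map of minimal barycentric coordinates of f. Suppose there are weights ω(α*) > 0 for α* ∈ D(f) such that Σ_{α*∈D(f)} ω(α*) ≤ 1, and for every α* ∈ D(f): f_{α*} > −ω(α*)·Θ(f,λ_f,α*) if α* ∈ (2ℕ₀)ⁿ, and |f_{α*}| < ω(α*)·Θ(f,λ_f,α*) if α* ∉ (2ℕ₀)ⁿ. Then f is coercive on ℝⁿ. -/

import Mathlib

open MvPolynomial Filter

noncomputable section

open scoped Classical

/-- The embedding of exponent vectors into `ℝⁿ`. -/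
def expEmbed {n : ℕ} (α : Fin n →₀ ℕ) : Fin n → ℝ := fun i => (α i : ℝ)

/-- The Newton polytope at infinity `New∞(f) = conv(A(f) ∪ {0})`. -/
def newtonInfty {n : ℕ} (f : MvPolynomial (Fin n) ℝ) : Set (Fin n → ℝ) :=
  convexHull ℝ (expEmbed '' ((insert 0 f.support : Finset (Fin n →₀ ℕ)) : Set (Fin n →₀ ℕ)))

/-- The vertex set `V₀(f)` of the Newton polytope at infinity, as a
finset of exponent vectors. -/
def V0 {n : ℕ} (f : MvPolynomial (Fin n) ℝ) : Finset (Fin n →₀ ℕ) :=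
  (insert 0 f.support).filter fun α => expEmbed α ∈ Set.extremePoints ℝ (newtonInfty f)

/-- The set `V(f) = V₀(f) \ {0}` of vertices at infinity. -/
def Vinf {n : ℕ} (f : MvPolynomial (Fin n) ℝ) : Finset (Fin n →₀ ℕ) := (V0 f).erase 0

/-- An exponent vector with all entries even, i.e. a member of `(2ℕ₀)ⁿ`. -/
def IsEvenExp {n : ℕ} (α : Fin n →₀ ℕ) : Prop := ∀ i, Even (α i)

/-- Condition (C1): `V(f) ⊆ (2ℕ₀)ⁿ`. -/
def CondC1 {n : ℕ} (f : MvPolynomial (Fin n) ℝ) : Prop := ∀ α ∈ Vinf f, IsEvenExp α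

/-- Condition (C2): positive coefficients at all vertices at infinity. -/
def CondC2 {n : ℕ} (f : MvPolynomial (Fin n) ℝ) : Prop := ∀ α ∈ Vinf f, 0 < f.coeff α

/-- Condition (C3): `V(f)` contains a vector `2 kᵢ eᵢ` for every `i`. -/
def CondC3 {n : ℕ} (f : MvPolynomial (Fin n) ℝ) : Prop :=
  ∀ i : Fin n, ∃ k : ℕ, 0 < k ∧ Finsupp.single i (2 * k) ∈ Vinf f

/-- An exponent vector of `f` is gem degenerate if it is no vertex at infinity but lies in
some nonempty face of `New∞(f)` not containing the origin. -/
def IsGemDegenerate {n : ℕ} (f : MvPolynomial (Fin n) ℝ) (α : Fin n →₀ ℕ) : Prop :=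
  α ∈ f.support ∧ α ∉ Vinf f ∧
    ∃ G : Set (Fin n → ℝ), G.Nonempty ∧ IsExtreme ℝ (newtonInfty f) G ∧
      (0 : Fin n → ℝ) ∉ G ∧ expEmbed α ∈ G

/-- The set `D(f)` of gem degenerate exponent vectors of `f`. -/
def Dfin {n : ℕ} (f : MvPolynomial (Fin n) ℝ) : Finset (Fin n →₀ ℕ) :=
  f.support.filter fun α => IsGemDegenerate f α

/-- `f` is gem regular if `D(f) = ∅`. -/
def GemRegular {n : ℕ} (f : MvPolynomial (Fin n) ℝ) : Prop := ∀ α, ¬ IsGemDegenerate f α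

/-- `V₀ᶜ(f) = A(f) \ V₀(f)`. -/
def V0c {n : ℕ} (f : MvPolynomial (Fin n) ℝ) : Finset (Fin n →₀ ℕ) := f.support \ V0 f

/-- A map of minimal barycentric coordinates of `f`. -/
def IsMinBary {n : ℕ} (f : MvPolynomial (Fin n) ℝ)
    (lam : (Fin n →₀ ℕ) → (Fin n →₀ ℕ) → ℝ) : Prop :=
  (∀ αs α, 0 ≤ lam αs α ∧ lam αs α ≤ 1) ∧
  ∀ αs ∈ V0c f, ∃ W : Finset (Fin n →₀ ℕ), W ⊆ V0 f ∧
    AffineIndependent ℝ (fun w : W => expEmbed (w : Fin n →₀ ℕ)) ∧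
    (∀ α ∈ W, 0 < lam αs α) ∧
    (∀ α ∈ V0 f, α ∉ W → lam αs α = 0) ∧
    (∑ α ∈ W, lam αs α) = 1 ∧
    (∑ α ∈ W, lam αs α • expEmbed α) = expEmbed αs

/-- `W_{α*}(λ_f)`, the minimal vertex representation of `α*` corresponding to `λ_f`. -/
def Wfin {n : ℕ} (f : MvPolynomial (Fin n) ℝ)
    (lam : (Fin n →₀ ℕ) → (Fin n →₀ ℕ) → ℝ) (αs : Fin n →₀ ℕ) : Finset (Fin n →₀ ℕ) :=
  (V0 f).filter fun α => 0 < lam αs α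

/-- The circuit number `Θ(f, λ_f, α*)`. -/
def circuitNumber {n : ℕ} (f : MvPolynomial (Fin n) ℝ)
    (lam : (Fin n →₀ ℕ) → (Fin n →₀ ℕ) → ℝ) (αs : Fin n →₀ ℕ) : ℝ :=
  ∏ α ∈ Wfin f lam αs, (f.coeff α / lam αs α) ^ (lam αs α)

/-- `g` is coercive on `ℝⁿ`: `g(x) → +∞` whenever `‖x‖ → +∞`. -/
def Coercive {n : ℕ} (g : (Fin n → ℝ) → ℝ) : Prop :=
  Tendsto g (comap (fun x : Fin n → ℝ => ‖x‖) atTop) atTop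


section Stmt6Aux

variable {n : ℕ}

/-- The componentwise absolute value monomial `∏ᵢ |xᵢ|^{αᵢ}`. -/
def absMono (α : Fin n →₀ ℕ) (x : Fin n → ℝ) : ℝ := ∏ i, |x i| ^ (α i)

lemma absMono_nonneg (α : Fin n →₀ ℕ) (x : Fin n → ℝ) : 0 ≤ absMono α x :=
  Finset.prod_nonneg fun i _ => pow_nonneg (abs_nonneg _) _

lemma abs_prod_pow (α : Fin n →₀ ℕ) (x : Fin n → ℝ) :
    |∏ i, x i ^ α i| = absMono α x := by
  rw [Finset.abs_prod]
  simp [absMono, abs_pow]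

lemma neg_absMono_le (α : Fin n →₀ ℕ) (x : Fin n → ℝ) :
    -(absMono α x) ≤ ∏ i, x i ^ α i := by
  rw [← abs_prod_pow]
  exact neg_abs_le _

lemma even_prod_pow {α : Fin n →₀ ℕ} (hα : IsEvenExp α) (x : Fin n → ℝ) :
    ∏ i, x i ^ α i = absMono α x := by
  unfold absMono
  refine Finset.prod_congr rfl fun i _ => ?_
  rw [Even.pow_abs (hα i)]

lemma absMono_zero (x : Fin n → ℝ) : absMono 0 x = 1 := by simp [absMono]

lemma expEmbed_zero : expEmbed (0 : Fin n →₀ ℕ) = 0 := by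
  funext i; simp [expEmbed]

lemma expEmbed_injective : Function.Injective (expEmbed (n := n)) := by
  intro a b h
  ext i
  exact Nat.cast_injective (congrFun h i)

/-- rpow form of `absMono`. -/
lemma absMono_eq_rpow (α : Fin n →₀ ℕ) (x : Fin n → ℝ) :
    absMono α x = ∏ i, |x i| ^ ((α i : ℝ)) := by
  unfold absMono
  refine Finset.prod_congr rfl fun i _ => ?_
  rw [Real.rpow_natCast]

/-- Key product identity: if `αs = ∑ μ β • β` (componentwise, with nonnegative `μ`), then
`absMono αs x = ∏ (absMono β x) ^ μ β`. -/
lemma absMono_prod_rpow (s : Finset (Fin n →₀ ℕ)) (μ : (Fin n →₀ ℕ) → ℝ)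
    (hμ : ∀ β ∈ s, 0 ≤ μ β) (αs : Fin n →₀ ℕ)
    (hp : ∀ j, ((αs j : ℝ)) = ∑ β ∈ s, μ β * (β j : ℝ)) (x : Fin n → ℝ) :
    absMono αs x = ∏ β ∈ s, (absMono β x) ^ (μ β) := by
  have step1 : ∀ β ∈ s, (absMono β x) ^ (μ β) = ∏ j, |x j| ^ ((β j : ℝ) * μ β) := by
    intro β hβ
    rw [absMono_eq_rpow, ← Real.finset_prod_rpow _ _ (fun j _ => Real.rpow_nonneg (abs_nonneg _) _)]
    refine Finset.prod_congr rfl fun j _ => ?_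
    rw [← Real.rpow_mul (abs_nonneg _)]
  rw [Finset.prod_congr rfl step1, Finset.prod_comm]
  rw [absMono_eq_rpow]
  refine Finset.prod_congr rfl fun j _ => ?_
  rw [hp j, show (∑ β ∈ s, μ β * (β j : ℝ)) = ∑ β ∈ s, ((β j : ℝ) * μ β) from
    Finset.sum_congr rfl fun β _ => mul_comm _ _,
    Real.rpow_sum_of_nonneg (abs_nonneg _)
    (fun β hβ => mul_nonneg (Nat.cast_nonneg _) (hμ β hβ))]

/-- Sublinear bound for `u ^ s` with `s < 1`. -/
lemma rpow_le_linear {s : ℝ} (hs0 : 0 ≤ s) (hs1 : s < 1) {ε : ℝ} (hε : 0 < ε) :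
    ∃ C : ℝ, 0 ≤ C ∧ ∀ u : ℝ, 0 ≤ u → u ^ s ≤ ε * u + C := by
  set M : ℝ := ε ^ (1 / (s - 1)) with hM
  have hM0 : 0 < M := Real.rpow_pos_of_pos hε _
  refine ⟨M ^ s, Real.rpow_nonneg hM0.le _, fun u hu => ?_⟩
  rcases le_or_gt u M with h | h
  · have : u ^ s ≤ M ^ s := Real.rpow_le_rpow hu h hs0
    nlinarith [mul_nonneg hε.le hu]
  · have hu0 : 0 < u := lt_trans hM0 h
    have hsum : (1 : ℝ) + (s - 1) = s := by ring
    have h1 : u ^ s = u * u ^ (s - 1) := by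
      conv_lhs => rw [← hsum]
      rw [Real.rpow_add hu0, Real.rpow_one]
    have hne : s - 1 ≠ 0 := by linarith
    have hMs : M ^ (s - 1) = ε := by
      rw [hM, ← Real.rpow_mul hε.le, one_div_mul_cancel hne, Real.rpow_one]
    have h2 : u ^ (s - 1) ≤ M ^ (s - 1) := by
      rw [show s - 1 = -(1 - s) by ring, Real.rpow_neg hu0.le, Real.rpow_neg hM0.le]
      exact inv_anti₀ (Real.rpow_pos_of_pos hM0 _)
        (Real.rpow_le_rpow hM0.le h.le (by linarith))
    have : u ^ s ≤ ε * u := by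
      rw [h1, ← hMs, mul_comm]
      exact mul_le_mul_of_nonneg_right h2 hu
    nlinarith [Real.rpow_nonneg hM0.le s]

end Stmt6Aux
section Stmt6Aux2

variable {n : ℕ}

/-- Weighted AM–GM bound for circuit-type estimates:
`(∏ (c β / λ β) ^ λ β) * absMono αs x ≤ ∑ c β * absMono β x`. -/
lemma circuit_amgm (W : Finset (Fin n →₀ ℕ)) (lamw c : (Fin n →₀ ℕ) → ℝ)
    (hl : ∀ β ∈ W, 0 < lamw β) (hl1 : ∑ β ∈ W, lamw β = 1)
    (hc : ∀ β ∈ W, 0 < c β) (αs : Fin n →₀ ℕ)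
    (hp : ∀ j, ((αs j : ℝ)) = ∑ β ∈ W, lamw β * (β j : ℝ)) (x : Fin n → ℝ) :
    (∏ β ∈ W, (c β / lamw β) ^ (lamw β)) * absMono αs x ≤ ∑ β ∈ W, c β * absMono β x := by
  have hmono := absMono_prod_rpow W lamw (fun β hβ => (hl β hβ).le) αs hp x
  rw [hmono, ← Finset.prod_mul_distrib]
  have h1 : ∀ β ∈ W, (c β / lamw β) ^ (lamw β) * (absMono β x) ^ (lamw β)
      = ((c β / lamw β) * absMono β x) ^ (lamw β) := by
    intro β hβ
    rw [← Real.mul_rpow (div_nonneg (hc β hβ).le (hl β hβ).le) (absMono_nonneg _ _)]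
  rw [Finset.prod_congr rfl h1]
  have h2 := Real.geom_mean_le_arith_mean_weighted W lamw
    (fun β => (c β / lamw β) * absMono β x) (fun β hβ => (hl β hβ).le) hl1
    (fun β hβ => mul_nonneg (div_nonneg (hc β hβ).le (hl β hβ).le) (absMono_nonneg _ _))
  refine h2.trans_eq (Finset.sum_congr rfl fun β hβ => ?_)
  field_simp
  rw [mul_assoc]; exact mul_div_cancel_left₀ _ (hl β hβ).ne'

/-- Sub-unit-sum AM–GM bound: if `αs = ∑ μ β • β` with `μ ≥ 0` and `0 < ∑ μ = s`, then
`absMono αs x ≤ (∑ absMono β x) ^ s`. -/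
lemma subunit_amgm (W : Finset (Fin n →₀ ℕ)) (μ : (Fin n →₀ ℕ) → ℝ)
    (hμ : ∀ β ∈ W, 0 ≤ μ β) {s : ℝ} (hs : s = ∑ β ∈ W, μ β) (hs0 : 0 < s)
    (αs : Fin n →₀ ℕ)
    (hp : ∀ j, ((αs j : ℝ)) = ∑ β ∈ W, μ β * (β j : ℝ)) (x : Fin n → ℝ) :
    absMono αs x ≤ (∑ β ∈ W, absMono β x) ^ s := by
  have hmono := absMono_prod_rpow W μ hμ αs hp x
  have hstep : ∀ β ∈ W, (absMono β x) ^ (μ β) = ((absMono β x) ^ (μ β / s)) ^ s := by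
    intro β hβ
    rw [← Real.rpow_mul (absMono_nonneg _ _), div_mul_cancel₀ _ hs0.ne']
  rw [hmono, Finset.prod_congr rfl hstep,
    Real.finset_prod_rpow _ _ (fun β hβ => Real.rpow_nonneg (absMono_nonneg _ _) _)]
  refine Real.rpow_le_rpow (Finset.prod_nonneg
    (fun β hβ => Real.rpow_nonneg (absMono_nonneg _ _) _)) ?_ hs0.le
  have hgm := Real.geom_mean_le_arith_mean_weighted W (fun β => μ β / s)
    (fun β => absMono β x) (fun β hβ => div_nonneg (hμ β hβ) hs0.le)
    (by rw [← Finset.sum_div, ← hs, div_self hs0.ne']) (fun β hβ => absMono_nonneg _ _)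
  refine hgm.trans (Finset.sum_le_sum fun β hβ => ?_)
  have h1 : μ β / s ≤ 1 := by
    rw [div_le_one hs0]
    rw [hs]
    exact Finset.single_le_sum hμ hβ
  calc μ β / s * absMono β x ≤ 1 * absMono β x :=
        mul_le_mul_of_nonneg_right h1 (absMono_nonneg _ _)
    _ = absMono β x := one_mul _

/-- If a strictly positive convex combination of points of `P` lies in an extreme subset `G`,
all the points lie in `G`. -/
lemma mem_extreme_of_combo {E : Type*} [AddCommGroup E] [Module ℝ E] {P G : Set E}
    (hP : Convex ℝ P) (hG : IsExtreme ℝ P G) {ι : Type*} (z : ι → E) (s : Finset ι) :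
    ∀ w : ι → ℝ, (∀ i ∈ s, 0 < w i) → (∑ i ∈ s, w i = 1) → (∀ i ∈ s, z i ∈ P) →
      (∑ i ∈ s, w i • z i) ∈ G → ∀ i ∈ s, z i ∈ G := by
  classical
  induction s using Finset.induction_on with
  | empty => intro w _ hw1 _ _ i hi; simp at hw1
  | @insert a t ha ih =>
    intro w hw hw1 hz hmem i hi
    rcases t.eq_empty_or_nonempty with rfl | hne
    · simp only [Finset.sum_insert (Finset.notMem_empty a), Finset.sum_empty, add_zero] at hw1 hmem
      have : w a • z a = z a := by rw [hw1, one_smul]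
      rw [this] at hmem
      rcases Finset.mem_insert.mp hi with rfl | hit
      · exact hmem
      · exact absurd hit (Finset.notMem_empty i)
    · have hT : 0 < ∑ i ∈ t, w i :=
        Finset.sum_pos (fun j hj => hw j (Finset.mem_insert_of_mem hj)) hne
      set T := ∑ i ∈ t, w i with hTdef
      have hwa : 0 < w a := hw a (Finset.mem_insert_self a t)
      have hsum : w a + T = 1 := by
        rw [hTdef, ← Finset.sum_insert ha]; exact hw1
      set y := ∑ i ∈ t, (w i / T) • z i with hy
      have hyP : y ∈ P := by
        refine hP.sum_mem (fun j hj => div_nonneg (hw j (Finset.mem_insert_of_mem hj)).le hT.le)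
          ?_ (fun j hj => hz j (Finset.mem_insert_of_mem hj))
        rw [← Finset.sum_div, div_self hT.ne']
      have hpt : w a • z a + T • y = ∑ i ∈ insert a t, w i • z i := by
        rw [Finset.sum_insert ha, hy, Finset.smul_sum]
        congr 1
        refine Finset.sum_congr rfl fun j hj => ?_
        rw [smul_smul, mul_div_cancel₀ _ hT.ne']
      have hseg : (∑ i ∈ insert a t, w i • z i) ∈ openSegment ℝ (z a) y := by
        rw [← hpt]
        exact ⟨w a, T, hwa, hT, hsum, rfl⟩
      have hext := hG.2 (hz a (Finset.mem_insert_self a t)) hyP hmem hseg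
      rcases Finset.mem_insert.mp hi with rfl | hit
      · exact hext
      · refine ih (fun j => w j / T) (fun j hj => div_pos (hw j (Finset.mem_insert_of_mem hj)) hT)
          ?_ (fun j hj => hz j (Finset.mem_insert_of_mem hj)) ?_ i hit
        · rw [← Finset.sum_div, div_self hT.ne']
        · rw [← hy]; exact hG.2 hyP (hz a (Finset.mem_insert_self a t)) hmem (by rwa [openSegment_symm])

end Stmt6Aux2
section Stmt6Aux3

variable {n : ℕ}

/-- The "minimal face" of a convex set at a point `p`: an extreme subset containing `p`, each of
whose points sees `p` in the relative interior direction. -/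
lemma exists_minimal_face {E : Type*} [AddCommGroup E] [Module ℝ E] {P : Set E}
    (hP : Convex ℝ P) {p : E} (hp : p ∈ P) :
    ∃ G : Set E, p ∈ G ∧ IsExtreme ℝ P G ∧
      ∀ q ∈ G, q = p ∨ ∃ y ∈ P, ∃ t : ℝ, 0 < t ∧ t < 1 ∧ p = t • q + (1 - t) • y := by
  classical
  set G : Set E := {q | q ∈ P ∧ (q = p ∨ ∃ y ∈ P, ∃ t : ℝ, 0 < t ∧ t < 1 ∧
    p = t • q + (1 - t) • y)} with hGdef
  have key : ∀ x1 x2 : E, x1 ∈ P → x2 ∈ P → ∀ x ∈ G, x ∈ openSegment ℝ x1 x2 → x1 ∈ G := by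
    intro x1 x2 hx1 hx2 x hxG hseg
    obtain ⟨a, b, ha, hb, hab, hx⟩ := hseg
    have ha1 : a < 1 := by linarith
    rcases hxG.2 with rfl | ⟨y, hy, t, ht0, ht1, hpt⟩
    · exact ⟨hx1, Or.inr ⟨x2, hx2, a, ha, ha1, by rw [← hx]; congr 1; rw [show 1 - a = b by linarith]⟩⟩
    · set c := t * a with hc
      have hc0 : 0 < c := mul_pos ht0 ha
      have hc1 : c < 1 := by nlinarith
      have hcne : (1 : ℝ) - c ≠ 0 := by linarith
      have h1c : (0:ℝ) < 1 - c := by linarith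
      set z := (t * b / (1 - c)) • x2 + ((1 - t) / (1 - c)) • y with hz
      have hzP : z ∈ P := by
        refine hP hx2 hy (div_nonneg (by positivity) h1c.le)
          (div_nonneg (by linarith) h1c.le) ?_
        rw [← add_div, div_eq_one_iff_eq h1c.ne', hc]
        nlinarith [hab]
      refine ⟨hx1, Or.inr ⟨z, hzP, c, hc0, hc1, ?_⟩⟩
      rw [hpt, ← hx, hz]
      match_scalars
      · ring
      · field_simp
      · field_simp
  refine ⟨G, ⟨hp, Or.inl rfl⟩, ⟨fun q hq => hq.1, ?_⟩, fun q hq => hq.2⟩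
  intro x1 hx1 x2 hx2 x hxG hseg
  exact key x1 x2 hx1 hx2 x hxG hseg

/-- The Newton polytope at infinity equals the convex hull of its vertex set. -/
lemma newtonInfty_eq_convexHull_V0 (f : MvPolynomial (Fin n) ℝ) :
    newtonInfty f = convexHull ℝ (expEmbed '' ((V0 f : Set (Fin n →₀ ℕ)))) := by
  have hfin : (expEmbed '' ((insert 0 f.support : Finset (Fin n →₀ ℕ)) :
      Set (Fin n →₀ ℕ))).Finite := (Finset.finite_toSet _).image _
  have hcomp : IsCompact (newtonInfty f) := hfin.isCompact_convexHull ℝ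
  have hconv : Convex ℝ (newtonInfty f) := convex_convexHull _ _
  have hεπ : (newtonInfty f).extremePoints ℝ = expEmbed '' ((V0 f : Set (Fin n →₀ ℕ))) := by
    apply Set.eq_of_subset_of_subset
    · intro y hy
      have hyA : y ∈ expEmbed '' ((insert 0 f.support : Finset (Fin n →₀ ℕ)) :
          Set (Fin n →₀ ℕ)) := extremePoints_convexHull_subset hy
      obtain ⟨α, hα, rfl⟩ := hyA
      exact ⟨α, Finset.mem_filter.mpr ⟨by exact_mod_cast hα, hy⟩, rfl⟩
    · rintro y ⟨α, hα, rfl⟩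
      exact (Finset.mem_filter.mp hα).2
  have hclosed : IsClosed (convexHull ℝ (expEmbed '' ((V0 f : Set (Fin n →₀ ℕ))))) :=
    ((Finset.finite_toSet _).image _).isClosed_convexHull ℝ
  calc newtonInfty f = closure (convexHull ℝ ((newtonInfty f).extremePoints ℝ)) :=
        (closure_convexHull_extremePoints hcomp hconv).symm
    _ = closure (convexHull ℝ (expEmbed '' ((V0 f : Set (Fin n →₀ ℕ))))) := by rw [hεπ]
    _ = convexHull ℝ (expEmbed '' ((V0 f : Set (Fin n →₀ ℕ)))) := hclosed.closure_eq

lemma mem_newtonInfty {f : MvPolynomial (Fin n) ℝ} {α : Fin n →₀ ℕ}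
    (hα : α ∈ insert 0 f.support) : expEmbed α ∈ newtonInfty f :=
  subset_convexHull _ _ ⟨α, by exact_mod_cast hα, rfl⟩

end Stmt6Aux3
set_option maxHeartbeats 2000000 in
/-- Theorem: sufficient conditions for coercivity via weights. -/
theorem stmt6 {n : ℕ} (f : MvPolynomial (Fin n) ℝ)
    (hC1 : CondC1 f) (hC2 : CondC2 f) (hC3 : CondC3 f)
    (lam : (Fin n →₀ ℕ) → (Fin n →₀ ℕ) → ℝ) (hlam : IsMinBary f lam)
    (ω : (Fin n →₀ ℕ) → ℝ)
    (hωpos : ∀ αs ∈ Dfin f, 0 < ω αs)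
    (hωsum : (∑ αs ∈ Dfin f, ω αs) ≤ 1)
    (heven : ∀ αs ∈ Dfin f, IsEvenExp αs → f.coeff αs > -(ω αs * circuitNumber f lam αs))
    (hodd : ∀ αs ∈ Dfin f, ¬ IsEvenExp αs → |f.coeff αs| < ω αs * circuitNumber f lam αs) :
    Coercive fun x => MvPolynomial.eval x f := by
  classical
  rcases Nat.eq_zero_or_pos n with hn | hn
  · subst hn
    have hbot : (comap (fun x : Fin 0 → ℝ => ‖x‖) atTop : Filter (Fin 0 → ℝ)) = ⊥ := by
      rw [← Filter.empty_mem_iff_bot, Filter.mem_comap]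
      refine ⟨Set.Ici 1, Ici_mem_atTop 1, fun x hx => ?_⟩
      exfalso
      have hx0 : x = 0 := Subsingleton.elim _ _
      have : (1 : ℝ) ≤ ‖x‖ := hx
      rw [hx0, norm_zero] at this
      linarith
    show Tendsto _ (comap (fun x : Fin 0 → ℝ => ‖x‖) atTop) atTop
    rw [hbot]
    exact tendsto_bot
  haveI : Nonempty (Fin n) := ⟨⟨0, hn⟩⟩
  -- basic facts
  have hVsupp : ∀ α ∈ Vinf f, α ∈ f.support := by
    intro α hα
    obtain ⟨hne0, hV0⟩ := Finset.mem_erase.mp hα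
    rcases Finset.mem_insert.mp (Finset.mem_filter.mp hV0).1 with h | h
    · exact absurd h hne0
    · exact h
  have hVinf_ne : (Vinf f).Nonempty := by
    obtain ⟨k, hk, hmem⟩ := hC3 ⟨0, hn⟩
    exact ⟨_, hmem⟩
  set S : (Fin n → ℝ) → ℝ := fun x => ∑ α ∈ Vinf f, f.coeff α * absMono α x with hS
  set u : (Fin n → ℝ) → ℝ := fun x => ∑ α ∈ Vinf f, absMono α x with hu
  have hS0 : ∀ x, 0 ≤ S x := fun x =>
    Finset.sum_nonneg fun α hα => mul_nonneg (hC2 α hα).le (absMono_nonneg _ _)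
  have hu0 : ∀ x, 0 ≤ u x := fun x => Finset.sum_nonneg fun α hα => absMono_nonneg _ _
  set c0 := (Vinf f).inf' hVinf_ne (fun α => f.coeff α) with hc0
  have hc0pos : 0 < c0 := by
    rw [hc0, Finset.lt_inf'_iff]
    exact fun α hα => hC2 α hα
  have hc0u : ∀ x, c0 * u x ≤ S x := by
    intro x
    rw [hu, hS, Finset.mul_sum]
    exact Finset.sum_le_sum fun α hα =>
      mul_le_mul_of_nonneg_right (Finset.inf'_le _ hα) (absMono_nonneg _ _)
  have hPconv : Convex ℝ (newtonInfty f) := convex_convexHull _ _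
  -- facts about `Dfin`
  have hD0 : (0 : Fin n →₀ ℕ) ∉ Dfin f := by
    intro h
    obtain ⟨-, hgem⟩ := Finset.mem_filter.mp h
    obtain ⟨-, -, G, -, -, hG0, hmem⟩ := hgem
    rw [expEmbed_zero] at hmem
    exact hG0 hmem
  have hDV0c : ∀ αs ∈ Dfin f, αs ∈ V0c f := by
    intro αs hαs
    obtain ⟨hsupp, hgem⟩ := Finset.mem_filter.mp hαs
    refine Finset.mem_sdiff.mpr ⟨hsupp, fun hV0mem => ?_⟩
    have hne : αs ≠ 0 := fun h => hD0 (h ▸ hαs)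
    exact hgem.2.1 (Finset.mem_erase.mpr ⟨hne, hV0mem⟩)
  -- the key degenerate-vertex estimate
  have hdeg : ∀ αs ∈ Dfin f, 0 < circuitNumber f lam αs ∧
      ∀ x, circuitNumber f lam αs * absMono αs x ≤ S x := by
    intro αs hαs
    obtain ⟨hsupp, hgem⟩ := Finset.mem_filter.mp hαs
    obtain ⟨-, hnotV, G, hGne, hGext, hG0, hGmem⟩ := hgem
    obtain ⟨W, hWV0, -, hWpos, hWzero, hWsum, hWcomb⟩ := hlam.2 αs (hDV0c αs hαs)
    have hWfin : Wfin f lam αs = W := by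
      ext β
      simp only [Wfin, Finset.mem_filter]
      constructor
      · rintro ⟨hβV0, hβpos⟩
        by_contra hβW
        exact absurd (hWzero β hβV0 hβW) (ne_of_gt hβpos)
      · intro hβW
        exact ⟨hWV0 hβW, hWpos β hβW⟩
    have hcomb : ∀ j, ((αs j : ℝ)) = ∑ β ∈ W, lam αs β * (β j : ℝ) := by
      intro j
      have h1 := congrFun hWcomb j
      simp only [Finset.sum_apply, Pi.smul_apply, smul_eq_mul, expEmbed] at h1
      exact h1.symm
    have hWG : ∀ β ∈ W, expEmbed β ∈ G := by
      refine mem_extreme_of_combo hPconv hGext expEmbed W (lam αs) hWpos hWsum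
        (fun β hβ => mem_newtonInfty (Finset.mem_filter.mp (hWV0 hβ)).1) ?_
      rw [hWcomb]
      exact hGmem
    have hWVinf : W ⊆ Vinf f := by
      intro β hβ
      refine Finset.mem_erase.mpr ⟨?_, hWV0 hβ⟩
      rintro rfl
      exact hG0 (expEmbed_zero ▸ hWG 0 hβ)
    have hθ : circuitNumber f lam αs = ∏ β ∈ W, (f.coeff β / lam αs β) ^ (lam αs β) := by
      rw [circuitNumber, hWfin]
    have hθpos : 0 < circuitNumber f lam αs := by
      rw [hθ]
      exact Finset.prod_pos fun β hβ => Real.rpow_pos_of_pos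
        (div_pos (hC2 β (hWVinf hβ)) (hWpos β hβ)) _
    refine ⟨hθpos, fun x => ?_⟩
    have hAM := circuit_amgm W (lam αs) (fun β => f.coeff β) hWpos hWsum
      (fun β hβ => hC2 β (hWVinf hβ)) αs hcomb x
    rw [hθ]
    refine hAM.trans ?_
    exact Finset.sum_le_sum_of_subset_of_nonneg hWVinf
      (fun β hβ _ => mul_nonneg (hC2 β hβ).le (absMono_nonneg _ _))
  -- strict slack `ε`
  set q : (Fin n →₀ ℕ) → ℝ := fun αs => ω αs * circuitNumber f lam αs with hq
  have hqpos : ∀ αs ∈ Dfin f, 0 < q αs := fun αs h => mul_pos (hωpos αs h) (hdeg αs h).1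
  set r : (Fin n →₀ ℕ) → ℝ := fun αs =>
    if IsEvenExp αs then (f.coeff αs + q αs) / q αs else (q αs - |f.coeff αs|) / q αs with hr
  have hrpos : ∀ αs ∈ Dfin f, 0 < r αs := by
    intro αs h
    rw [hr]
    dsimp only
    split_ifs with he
    · refine div_pos ?_ (hqpos αs h)
      show 0 < f.coeff αs + ω αs * circuitNumber f lam αs
      linarith [heven αs h he]
    · refine div_pos ?_ (hqpos αs h)
      show 0 < ω αs * circuitNumber f lam αs - |f.coeff αs|
      linarith [hodd αs h he]
  obtain ⟨ε, hε0, hε1, hεr⟩ : ∃ ε : ℝ, 0 < ε ∧ ε ≤ 1 ∧ ∀ αs ∈ Dfin f, ε ≤ r αs := by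
    rcases (Dfin f).eq_empty_or_nonempty with hD | hD
    · exact ⟨1, one_pos, le_refl 1, fun αs h => absurd h (by rw [hD]; exact Finset.notMem_empty _)⟩
    · refine ⟨min 1 ((Dfin f).inf' hD r), ?_, min_le_left _ _, ?_⟩
      · refine lt_min one_pos ?_
        rw [Finset.lt_inf'_iff]
        exact fun αs h => hrpos αs h
      · intro αs h
        exact le_trans (min_le_right _ _) (Finset.inf'_le _ h)
  -- pointwise degenerate estimate
  have hdegterm : ∀ αs ∈ Dfin f, ∀ x,
      -((1 - ε) * ω αs * S x) ≤ f.coeff αs * ∏ i, x i ^ αs i := by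
    intro αs hαs x
    have hq0 := hqpos αs hαs
    have hθS := (hdeg αs hαs).2 x
    have hA : -((1 - ε) * q αs) * absMono αs x ≤ f.coeff αs * ∏ i, x i ^ αs i := by
      by_cases he : IsEvenExp αs
      · rw [even_prod_pow he]
        refine mul_le_mul_of_nonneg_right ?_ (absMono_nonneg _ _)
        have hre := hεr αs hαs
        rw [hr] at hre
        dsimp only at hre
        rw [if_pos he, le_div_iff₀ hq0] at hre
        linarith
      · have h1 : -(|f.coeff αs| * absMono αs x) ≤ f.coeff αs * ∏ i, x i ^ αs i := by
          calc -(|f.coeff αs| * absMono αs x) = -|f.coeff αs * ∏ i, x i ^ αs i| := by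
                rw [abs_mul, abs_prod_pow]
            _ ≤ _ := neg_abs_le _
        refine le_trans ?_ h1
        have hre := hεr αs hαs
        rw [hr] at hre
        dsimp only at hre
        rw [if_neg he, le_div_iff₀ hq0] at hre
        have h2 : |f.coeff αs| ≤ (1 - ε) * q αs := by linarith
        have := mul_le_mul_of_nonneg_right h2 (absMono_nonneg αs x)
        linarith
    have hchain : (1 - ε) * q αs * absMono αs x ≤ (1 - ε) * ω αs * S x := by
      have h2 : q αs * absMono αs x = ω αs * (circuitNumber f lam αs * absMono αs x) := by
        rw [hq]; ring
      calc (1 - ε) * q αs * absMono αs x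
          = (1 - ε) * (ω αs * (circuitNumber f lam αs * absMono αs x)) := by rw [← h2]; ring
        _ ≤ (1 - ε) * (ω αs * S x) := by
            refine mul_le_mul_of_nonneg_left ?_ (by linarith)
            exact mul_le_mul_of_nonneg_left hθS (hωpos αs hαs).le
        _ = (1 - ε) * ω αs * S x := by ring
    nlinarith [hA, hchain]
  -- degenerate sum estimate
  have hdegsum : ∀ x, -((1 - ε) * S x) ≤ ∑ αs ∈ Dfin f, f.coeff αs * ∏ i, x i ^ αs i := by
    intro x
    have h1 : ∑ αs ∈ Dfin f, -((1 - ε) * ω αs * S x)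
        ≤ ∑ αs ∈ Dfin f, f.coeff αs * ∏ i, x i ^ αs i :=
      Finset.sum_le_sum fun αs h => hdegterm αs h x
    have hfac : ∑ αs ∈ Dfin f, ((1 - ε) * ω αs * S x)
        = ((1 - ε) * S x) * ∑ αs ∈ Dfin f, ω αs := by
      rw [Finset.mul_sum]
      exact Finset.sum_congr rfl fun αs _ => by ring
    have h2 : ((1 - ε) * S x) * (∑ αs ∈ Dfin f, ω αs) ≤ ((1 - ε) * S x) * 1 := by
      refine mul_le_mul_of_nonneg_left hωsum ?_
      have := hS0 x
      nlinarith
    rw [Finset.sum_neg_distrib] at h1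
    rw [hfac] at h1
    nlinarith [h1, h2]
  -- nondegenerate non-vertex exponents
  set Nd := (f.support \ Vinf f) \ Dfin f with hNd
  set δ := ε * c0 / (2 * ((Nd.card : ℝ) + 1)) with hδ
  have hδ0 : 0 < δ := by
    rw [hδ]
    positivity
  have hndterm : ∀ αs : Fin n →₀ ℕ, ∃ C : ℝ, 0 ≤ C ∧
      (αs ∈ Nd → ∀ x, |f.coeff αs| * absMono αs x ≤ δ * u x + C) := by
    intro αs
    by_cases hmem : αs ∈ Nd
    swap
    · exact ⟨0, le_refl 0, fun h => absurd h hmem⟩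
    have hmem' := Finset.mem_sdiff.mp hmem
    obtain ⟨hsupp, hnotV⟩ := Finset.mem_sdiff.mp hmem'.1
    have hnotD := hmem'.2
    by_cases h0 : αs = 0
    · subst h0
      refine ⟨|f.coeff 0|, abs_nonneg _, fun _ x => ?_⟩
      rw [absMono_zero, mul_one]
      have : 0 ≤ δ * u x := mul_nonneg hδ0.le (hu0 x)
      linarith
    have hgem : ¬ IsGemDegenerate f αs := fun h => hnotD (Finset.mem_filter.mpr ⟨hsupp, h⟩)
    have hpP : expEmbed αs ∈ newtonInfty f := mem_newtonInfty (Finset.mem_insert_of_mem hsupp)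
    obtain ⟨G, hpG, hGext, hGprop⟩ := exists_minimal_face hPconv hpP
    have h0G : (0 : Fin n → ℝ) ∈ G := by
      by_contra h0G
      exact hgem ⟨hsupp, hnotV, G, ⟨_, hpG⟩, hGext, h0G, hpG⟩
    rcases hGprop 0 h0G with h0p | ⟨y, hyP, t, ht0, ht1, hpt⟩
    · exfalso
      have : expEmbed αs = expEmbed 0 := by rw [expEmbed_zero, ← h0p]
      exact h0 (expEmbed_injective this)
    · have hpy : expEmbed αs = (1 - t) • y := by rw [hpt, smul_zero, zero_add]
      rw [newtonInfty_eq_convexHull_V0] at hyP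
      have hyP' : y ∈ convexHull ℝ
          (((V0 f).image expEmbed : Finset (Fin n → ℝ)) : Set (Fin n → ℝ)) := by
        rwa [Finset.coe_image]
      obtain ⟨w, hw0, hw1, hwy⟩ := Finset.mem_convexHull'.mp hyP'
      have hinj : ∀ a ∈ V0 f, ∀ b ∈ V0 f, expEmbed a = expEmbed b → a = b :=
        fun a _ b _ h => expEmbed_injective h
      have hw0' : ∀ β ∈ V0 f, 0 ≤ w (expEmbed β) :=
        fun β hβ => hw0 _ (Finset.mem_image_of_mem _ hβ)
      set μ : (Fin n →₀ ℕ) → ℝ := fun β => (1 - t) * w (expEmbed β) with hμdef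
      have h1t : (0:ℝ) < 1 - t := by linarith
      have hμ0 : ∀ β ∈ Vinf f, 0 ≤ μ β := fun β hβ =>
        mul_nonneg h1t.le (hw0' β (Finset.mem_of_mem_erase hβ))
      have hyj : ∀ j, y j = ∑ β ∈ V0 f, w (expEmbed β) * (expEmbed β j) := by
        intro j
        have h1 := congrFun hwy j
        rw [Finset.sum_apply] at h1
        simp only [Pi.smul_apply, smul_eq_mul] at h1
        rw [← h1, Finset.sum_image hinj]
      have hcomb : ∀ j, ((αs j : ℝ)) = ∑ β ∈ Vinf f, μ β * (β j : ℝ) := by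
        intro j
        have h1 : (αs j : ℝ) = (1 - t) * y j := by
          have := congrFun hpy j
          simpa only [Pi.smul_apply, smul_eq_mul, expEmbed] using this
        rw [h1, hyj j, Finset.mul_sum]
        rw [show ∑ β ∈ V0 f, (1 - t) * (w (expEmbed β) * expEmbed β j)
            = ∑ β ∈ V0 f, μ β * (β j : ℝ) from Finset.sum_congr rfl fun β _ => by
          simp only [hμdef, expEmbed]; ring]
        refine (Finset.sum_subset (Finset.erase_subset _ _) fun β hβV0 hβnV => ?_).symm
        have hβ0 : β = 0 := by
          by_contra hne
          exact hβnV (Finset.mem_erase.mpr ⟨hne, hβV0⟩)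
        subst hβ0
        simp
      set s0 := ∑ β ∈ Vinf f, μ β with hs0def
      have hs0le : s0 ≤ 1 - t := by
        have h1 : ∑ β ∈ Vinf f, w (expEmbed β) ≤ ∑ β ∈ V0 f, w (expEmbed β) :=
          Finset.sum_le_sum_of_subset_of_nonneg (Finset.erase_subset _ _)
            (fun β hβ _ => hw0' β hβ)
        have h2 : ∑ β ∈ V0 f, w (expEmbed β) = 1 := by
          rw [← Finset.sum_image hinj]
          exact hw1
        have h3 : s0 = (1 - t) * ∑ β ∈ Vinf f, w (expEmbed β) := by
          rw [hs0def, Finset.mul_sum]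
        rw [h3]
        nlinarith
      have hs0lt : s0 < 1 := lt_of_le_of_lt hs0le (by linarith)
      have hs0nonneg : 0 ≤ s0 := Finset.sum_nonneg hμ0
      have hs0pos : 0 < s0 := by
        rcases lt_or_eq_of_le hs0nonneg with h | h
        · exact h
        · exfalso
          have hall : ∀ β ∈ Vinf f, μ β = 0 :=
            (Finset.sum_eq_zero_iff_of_nonneg hμ0).mp h.symm
          have : ∀ j, (αs j : ℝ) = 0 := by
            intro j
            rw [hcomb j]
            exact Finset.sum_eq_zero fun β hβ => by rw [hall β hβ, zero_mul]
          refine h0 (Finsupp.ext fun j => ?_)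
          exact_mod_cast this j
      have hmle : ∀ x, absMono αs x ≤ (u x) ^ s0 := fun x =>
        subunit_amgm (Vinf f) μ hμ0 hs0def hs0pos αs hcomb x
      obtain ⟨C', hC'0, hC'⟩ := rpow_le_linear hs0nonneg hs0lt
        (div_pos hδ0 (by positivity : (0:ℝ) < |f.coeff αs| + 1))
      refine ⟨|f.coeff αs| * C', mul_nonneg (abs_nonneg _) hC'0, fun _ x => ?_⟩
      have h1 : |f.coeff αs| * absMono αs x ≤ |f.coeff αs| * (u x) ^ s0 :=
        mul_le_mul_of_nonneg_left (hmle x) (abs_nonneg _)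
      have h2 : |f.coeff αs| * (u x) ^ s0
          ≤ |f.coeff αs| * (δ / (|f.coeff αs| + 1) * u x + C') :=
        mul_le_mul_of_nonneg_left (hC' (u x) (hu0 x)) (abs_nonneg _)
      have hkey : |f.coeff αs| * (δ / (|f.coeff αs| + 1)) ≤ δ := by
        rw [mul_div_assoc']
        rw [div_le_iff₀ (by positivity : (0:ℝ) < |f.coeff αs| + 1)]
        nlinarith [abs_nonneg (f.coeff αs), hδ0]
      have h3 : |f.coeff αs| * (δ / (|f.coeff αs| + 1) * u x + C')
          = (|f.coeff αs| * (δ / (|f.coeff αs| + 1))) * u x + |f.coeff αs| * C' := by ring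
      have h4 : (|f.coeff αs| * (δ / (|f.coeff αs| + 1))) * u x ≤ δ * u x :=
        mul_le_mul_of_nonneg_right hkey (hu0 x)
      linarith
  choose Cfun hCfun0 hCfunb using hndterm
  set CC := ∑ αs ∈ Nd, Cfun αs with hCC
  have hndsum : ∀ x, -((Nd.card : ℝ) * (δ * u x) + CC)
      ≤ ∑ αs ∈ Nd, f.coeff αs * ∏ i, x i ^ αs i := by
    intro x
    have h1 : ∀ αs ∈ Nd, -(δ * u x + Cfun αs) ≤ f.coeff αs * ∏ i, x i ^ αs i := by
      intro αs h
      have h2 : -(|f.coeff αs| * absMono αs x) ≤ f.coeff αs * ∏ i, x i ^ αs i := by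
        calc -(|f.coeff αs| * absMono αs x) = -|f.coeff αs * ∏ i, x i ^ αs i| := by
              rw [abs_mul, abs_prod_pow]
          _ ≤ _ := neg_abs_le _
      have h3 := hCfunb αs h x
      linarith
    have h4 : ∑ αs ∈ Nd, (δ * u x + Cfun αs) = (Nd.card : ℝ) * (δ * u x) + CC := by
      rw [Finset.sum_add_distrib, Finset.sum_const, nsmul_eq_mul, hCC]
    calc -((Nd.card:ℝ) * (δ * u x) + CC) = ∑ αs ∈ Nd, -(δ * u x + Cfun αs) := by
          rw [Finset.sum_neg_distrib, h4]
      _ ≤ _ := Finset.sum_le_sum h1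
  -- decomposition of the evaluation
  have hVsub : Vinf f ⊆ f.support := fun α hα => hVsupp α hα
  have hDsub : Dfin f ⊆ f.support \ Vinf f := by
    intro αs h
    obtain ⟨hsupp, hg⟩ := Finset.mem_filter.mp h
    exact Finset.mem_sdiff.mpr ⟨hsupp, hg.2.1⟩
  have hsplit : ∀ x : Fin n → ℝ, MvPolynomial.eval x f
      = S x + (∑ αs ∈ Dfin f, f.coeff αs * ∏ i, x i ^ αs i)
        + (∑ αs ∈ Nd, f.coeff αs * ∏ i, x i ^ αs i) := by
    intro x
    have hSV : ∑ α ∈ Vinf f, f.coeff α * ∏ i, x i ^ α i = S x := by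
      rw [hS]
      exact Finset.sum_congr rfl fun α hα => by rw [even_prod_pow (hC1 α hα)]
    calc MvPolynomial.eval x f
        = ∑ αs ∈ f.support, f.coeff αs * ∏ i, x i ^ αs i := MvPolynomial.eval_eq' x f
      _ = (∑ αs ∈ f.support \ Vinf f, f.coeff αs * ∏ i, x i ^ αs i)
          + ∑ αs ∈ Vinf f, f.coeff αs * ∏ i, x i ^ αs i := (Finset.sum_sdiff hVsub).symm
      _ = ((∑ αs ∈ Nd, f.coeff αs * ∏ i, x i ^ αs i)
          + ∑ αs ∈ Dfin f, f.coeff αs * ∏ i, x i ^ αs i)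
          + ∑ αs ∈ Vinf f, f.coeff αs * ∏ i, x i ^ αs i := by
            rw [hNd, Finset.sum_sdiff hDsub]
      _ = _ := by rw [hSV]; ring
  -- global lower bound
  have hlower : ∀ x, ε / 2 * S x - CC ≤ MvPolynomial.eval x f := by
    intro x
    have h1 := hdegsum x
    have h2 := hndsum x
    have hcard : (Nd.card : ℝ) * δ ≤ ε * c0 / 2 := by
      rw [hδ, mul_div_assoc']
      rw [div_le_div_iff₀ (by positivity) (by norm_num : (0:ℝ) < 2)]
      nlinarith [Nat.cast_nonneg (α := ℝ) Nd.card, hε0, hc0pos]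
    have h3 : (Nd.card : ℝ) * (δ * u x) ≤ ε / 2 * S x := by
      calc (Nd.card:ℝ) * (δ * u x) = ((Nd.card:ℝ) * δ) * u x := by ring
        _ ≤ (ε * c0 / 2) * u x := mul_le_mul_of_nonneg_right hcard (hu0 x)
        _ = (ε/2) * (c0 * u x) := by ring
        _ ≤ ε/2 * S x := mul_le_mul_of_nonneg_left (hc0u x) (by positivity)
    rw [hsplit x]
    nlinarith [hS0 x]
  -- growth of S
  choose k hkpos hkmem using hC3
  set c3 := Finset.univ.inf' Finset.univ_nonempty
    (fun i : Fin n => f.coeff (Finsupp.single i (2 * k i))) with hc3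
  have hc3pos : 0 < c3 := by
    rw [hc3, Finset.lt_inf'_iff]
    exact fun i _ => hC2 _ (hkmem i)
  have hSgrow : ∀ x : Fin n → ℝ, 1 ≤ ‖x‖ → c3 * ‖x‖^2 ≤ S x := by
    intro x hx
    obtain ⟨i, -, hi⟩ := Finset.exists_mem_eq_sup Finset.univ Finset.univ_nonempty
      (fun i => ‖x i‖₊)
    have hnorm : ‖x‖ = |x i| := by
      rw [Pi.norm_def, hi, coe_nnnorm, Real.norm_eq_abs]
    have hterm : absMono (Finsupp.single i (2 * k i)) x = |x i| ^ (2 * k i) := by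
      unfold absMono
      rw [Finset.prod_eq_single_of_mem i (Finset.mem_univ i)
        (fun j _ hj => by rw [Finsupp.single_apply, if_neg (Ne.symm hj), pow_zero]),
        Finsupp.single_eq_same]
    have h2 : |x i| ^ 2 ≤ |x i| ^ (2 * k i) := by
      refine pow_le_pow_right₀ ?_ ?_
      · rwa [← hnorm]
      · have := hkpos i
        omega
    have h1 : c3 * ‖x‖^2 ≤ f.coeff (Finsupp.single i (2 * k i))
        * absMono (Finsupp.single i (2 * k i)) x := by
      rw [hterm, hnorm]
      exact mul_le_mul (Finset.inf'_le _ (Finset.mem_univ i)) h2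
        (pow_nonneg (abs_nonneg _) 2) (hC2 _ (hkmem i)).le
    refine h1.trans ?_
    show _ ≤ ∑ α ∈ Vinf f, f.coeff α * absMono α x
    exact Finset.single_le_sum (f := fun α => f.coeff α * absMono α x)
      (fun α hα => mul_nonneg (hC2 α hα).le (absMono_nonneg _ _)) (hkmem i)
  -- conclusion
  show Tendsto _ (comap (fun x : Fin n → ℝ => ‖x‖) atTop) atTop
  refine Filter.tendsto_atTop.mpr fun M => ?_
  have hk2 : 0 < ε / 2 * c3 := by positivity
  set R := max 1 ((M + CC) / (ε / 2 * c3)) with hR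
  have hR1 : (1:ℝ) ≤ R := le_max_left _ _
  have hR0 : (0:ℝ) ≤ R := by linarith
  have hRM : (M + CC) / (ε / 2 * c3) ≤ R := le_max_right _ _
  have hev : ∀ᶠ x in comap (fun x : Fin n → ℝ => ‖x‖) atTop, R ≤ ‖x‖ :=
    tendsto_comap.eventually (eventually_ge_atTop R)
  refine hev.mono fun x hx => ?_
  have hx1 : 1 ≤ ‖x‖ := le_trans hR1 hx
  have hg := hSgrow x hx1
  have hl := hlower x
  have hsq : R^2 ≤ ‖x‖^2 := pow_le_pow_left₀ hR0 hx 2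
  have hRR : M + CC ≤ ε / 2 * c3 * R := by
    rw [div_le_iff₀ hk2] at hRM
    linarith
  have hR2 : R ≤ R^2 := by nlinarith
  have hchain : M ≤ ε / 2 * (c3 * ‖x‖^2) - CC := by nlinarith
  have hfin : ε / 2 * (c3 * ‖x‖^2) ≤ ε / 2 * S x :=
    mul_le_mul_of_nonneg_left hg (by positivity)
  calc M ≤ ε / 2 * (c3 * ‖x‖^2) - CC := hchain
    _ ≤ ε / 2 * S x - CC := by linarith
    _ ≤ MvPolynomial.eval x f := hl
end
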